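/- Let K be a field, r ≥ 1, let a : ℕʳ → K be a rational r-sequence, and let d ≥ 1 be an integer. Then the r-sequence b defined by b(n₁,n₂,…,n_r) = a(d·n₁,n₂,…,n_r) is rational. -/

import Mathlib

set_option maxHeartbeats 1000000
set_option synthInstance.maxHeartbeats 400000

/-- The Hilbert series of an `r`-sequence `a : ℕʳ → K`, i.e. the multivariate formal
power series `Σ_{n ∈ ℕʳ} a(n)·t₁^{n₁}⋯t_r^{n_r}`. -/
def hilbertSeries {K : Type*} [Field K] {r : ℕ} (a : (Fin r → ℕ) → K) :
    MvPowerSeries (Fin r) K :=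
  fun d => a d

/-- An `r`-sequence is rational if there are polynomials `P, Q ∈ K[t₁,…,t_r]` with `Q`
having nonzero constant term such that `H_a · Q = P` in `K[[t₁,…,t_r]]`. -/
def IsRationalMSeq {K : Type*} [Field K] {r : ℕ} (a : (Fin r → ℕ) → K) : Prop :=
  ∃ P Q : MvPolynomial (Fin r) K, MvPolynomial.coeff 0 Q ≠ 0 ∧
    hilbertSeries a * (Q : MvPowerSeries (Fin r) K) = (P : MvPowerSeries (Fin r) K)

namespace DilationAux

open MvPolynomial Finset Matrix

variable {K : Type*} [Field K] {r : ℕ} (i0 : Fin r) (d : ℕ)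

/-- Multiply the `i0`-th exponent by `d`. -/
noncomputable def upE (m : Fin r →₀ ℕ) : Fin r →₀ ℕ := m.update i0 (d * m i0)

/-- Divide the `i0`-th exponent by `d`. -/
noncomputable def dnE (m : Fin r →₀ ℕ) : Fin r →₀ ℕ := m.update i0 (m i0 / d)

lemma update_apply' (m : Fin r →₀ ℕ) (v : ℕ) (x : Fin r) :
    m.update i0 v x = if x = i0 then v else m x := by
  simp [Finsupp.coe_update, Function.update_apply]

lemma upE_apply (m : Fin r →₀ ℕ) (x : Fin r) :
    upE i0 d m x = if x = i0 then d * m i0 else m x := update_apply' i0 m _ x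

lemma dnE_apply (m : Fin r →₀ ℕ) (x : Fin r) :
    dnE i0 d m x = if x = i0 then m i0 / d else m x := update_apply' i0 m _ x

lemma upE_i0 (m : Fin r →₀ ℕ) : upE i0 d m i0 = d * m i0 := by simp [upE_apply]

lemma upE_zero : upE i0 d 0 = 0 := by
  ext x; simp [upE_apply]

lemma upE_add (u v : Fin r →₀ ℕ) : upE i0 d (u + v) = upE i0 d u + upE i0 d v := by
  ext x
  rcases eq_or_ne x i0 with h | h <;>
    simp [upE_apply, h, Finsupp.add_apply, Nat.mul_add]

lemma dnE_upE (hd : 0 < d) (m : Fin r →₀ ℕ) : dnE i0 d (upE i0 d m) = m := by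
  ext x
  rcases eq_or_ne x i0 with h | h <;>
    simp [upE_apply, dnE_apply, h, Nat.mul_div_cancel_left _ hd]

lemma upE_dnE (m : Fin r →₀ ℕ) (h : d ∣ m i0) : upE i0 d (dnE i0 d m) = m := by
  ext x
  rcases eq_or_ne x i0 with hx | hx <;>
    simp [upE_apply, dnE_apply, hx, Nat.mul_div_cancel' h]

lemma single_add_eq (e : Fin r →₀ ℕ) (k : ℕ) :
    (Finsupp.single i0 k) + e = e.update i0 (e i0 + k) := by
  ext x
  rcases eq_or_ne x i0 with h | h
  · subst h
    simp [Finsupp.add_apply, Finsupp.single_apply, update_apply', add_comm]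
  · simp [Finsupp.add_apply, Finsupp.single_apply, update_apply', h, Ne.symm h]

lemma update_update (e : Fin r →₀ ℕ) (v w : ℕ) :
    (e.update i0 v).update i0 w = e.update i0 w := by
  ext x
  rcases eq_or_ne x i0 with h | h <;> simp [update_apply', h]

lemma update_same (e : Fin r →₀ ℕ) (v : ℕ) : e.update i0 v i0 = v := by
  simp [update_apply']

/-- Contract the `i0`-exponent of a polynomial by a factor `d` (dropping all monomials
whose `i0`-exponent is not divisible by `d`). -/
noncomputable def contract (G : MvPolynomial (Fin r) K) : MvPolynomial (Fin r) K :=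
  ∑ e ∈ G.support.filter (fun e => d ∣ e i0),
    monomial (e.update i0 (e i0 / d)) (G.coeff e)

lemma contract_coeff (hd : 0 < d) (G : MvPolynomial (Fin r) K) (m : Fin r →₀ ℕ) :
    (contract i0 d G).coeff m = G.coeff (upE i0 d m) := by
  classical
  rw [contract, coeff_sum]
  have hup : ∀ e : Fin r →₀ ℕ, e.update i0 (e i0 / d) = dnE i0 d e := fun _ => rfl
  simp_rw [hup, coeff_monomial]
  rw [Finset.sum_eq_single (upE i0 d m), if_pos (dnE_upE i0 d hd m)]
  · intro e he hne
    rw [if_neg]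
    intro hcontra
    apply hne
    rw [mem_filter] at he
    rw [← upE_dnE i0 d e he.2, hcontra]
  · intro hnm
    rw [if_pos (dnE_upE i0 d hd m)]
    by_contra hne
    exact hnm (mem_filter.2 ⟨mem_support_iff.2 hne, ⟨m i0, (upE_i0 i0 d m)⟩⟩)

variable (Q : MvPolynomial (Fin r) K)

/-- The matrix of multiplication by `Q` on `K[t]` viewed over the subring of
polynomials all of whose `i0`-exponents are divisible by `d`, in the basis
`t_{i0}^0, …, t_{i0}^{d-1}`. -/
noncomputable def Wmat (j s : Fin d) : MvPolynomial (Fin r) K :=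
  ∑ e ∈ Q.support.filter (fun e => (e i0 + (s : ℕ)) % d = (j : ℕ)),
    monomial (e.update i0 (e i0 + (s : ℕ) - (j : ℕ))) (Q.coeff e)

lemma X_pow_mul_eq (k : ℕ) :
    X i0 ^ k * Q = ∑ e ∈ Q.support, monomial (e.update i0 (e i0 + k)) (Q.coeff e) := by
  conv_lhs => rw [Q.as_sum]
  rw [Finset.mul_sum]
  refine Finset.sum_congr rfl fun e he => ?_
  rw [X_pow_eq_monomial, monomial_mul, one_mul, single_add_eq]

lemma key_rel (hd : 0 < d) (s : Fin d) :
    X i0 ^ (s : ℕ) * Q = ∑ j : Fin d, X i0 ^ (j : ℕ) * Wmat i0 d Q j s := by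
  classical
  rw [X_pow_mul_eq]
  have hstep : ∀ j : Fin d, X i0 ^ (j : ℕ) * Wmat i0 d Q j s
      = ∑ e ∈ Q.support.filter (fun e => (e i0 + (s : ℕ)) % d = (j : ℕ)),
          monomial (e.update i0 (e i0 + (s : ℕ))) (Q.coeff e) := by
    intro j
    rw [Wmat, Finset.mul_sum]
    refine Finset.sum_congr rfl fun e he => ?_
    have hj : (j : ℕ) ≤ e i0 + (s : ℕ) := by
      rw [mem_filter] at he
      rw [← he.2]
      exact Nat.mod_le _ _
    rw [X_pow_eq_monomial, monomial_mul, one_mul, single_add_eq, update_same,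
      update_update, Nat.sub_add_cancel hj]
  simp_rw [hstep]
  have hfib := Finset.sum_fiberwise (Q.support)
    (fun e => (⟨(e i0 + (s : ℕ)) % d, Nat.mod_lt _ hd⟩ : Fin d))
    (fun e => monomial (e.update i0 (e i0 + (s : ℕ))) (Q.coeff e))
  rw [← hfib]
  refine Finset.sum_congr rfl fun j _ => Finset.sum_congr ?_ fun _ _ => rfl
  ext e
  simp [Fin.ext_iff]

lemma det_dvd (hd : 0 < d) : Q ∣ (Matrix.of (Wmat i0 d Q)).det := by
  classical
  set Wm : Matrix (Fin d) (Fin d) (MvPolynomial (Fin r) K) := Matrix.of (Wmat i0 d Q) with hWm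
  set x : Fin d → MvPolynomial (Fin r) K := (fun j => X i0 ^ (j : ℕ)) with hx
  have h1 : Wmᵀ.mulVec x = Q • x := by
    funext s
    show (∑ j : Fin d, Wmᵀ s j * x j) = (Q • x) s
    calc (∑ j : Fin d, Wmᵀ s j * x j)
        = ∑ j : Fin d, X i0 ^ (j : ℕ) * Wmat i0 d Q j s :=
          Finset.sum_congr rfl fun j _ => mul_comm _ _
      _ = X i0 ^ (s : ℕ) * Q := (key_rel i0 d Q hd s).symm
      _ = (Q • x) s := by
          show X i0 ^ (s : ℕ) * Q = Q * X i0 ^ (s : ℕ)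
          ring
  have h2 := congrArg (fun v => Wmᵀ.adjugate.mulVec v) h1
  simp only [Matrix.mulVec_mulVec, Matrix.adjugate_mul, Matrix.mulVec_smul,
    Matrix.smul_mulVec, Matrix.one_mulVec] at h2
  have h3 := congrFun h2 (⟨0, hd⟩ : Fin d)
  simp only [Pi.smul_apply, smul_eq_mul] at h3
  have hx0 : x ⟨0, hd⟩ = 1 := pow_zero _
  rw [hx0, mul_one] at h3
  exact ⟨Wmᵀ.adjugate.mulVec x ⟨0, hd⟩, by rw [← Matrix.det_transpose Wm, h3]⟩

lemma Wmat_dvd_coeff (j s : Fin d) (m : Fin r →₀ ℕ) (hm : (Wmat i0 d Q j s).coeff m ≠ 0) :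
    d ∣ m i0 := by
  classical
  rw [Wmat, coeff_sum] at hm
  obtain ⟨e, he, hne⟩ := Finset.exists_ne_zero_of_sum_ne_zero hm
  rw [coeff_monomial] at hne
  split at hne
  · rename_i hEq
    have hm0 := congrArg (fun f : Fin r →₀ ℕ => f i0) hEq
    simp only [update_same] at hm0
    rw [mem_filter] at he
    rw [← hm0, ← he.2]
    exact Nat.dvd_sub_mod _
  · exact absurd rfl hne

lemma det_dvd_coeff (hd : 0 < d) (m : Fin r →₀ ℕ)
    (hm : (Matrix.of (Wmat i0 d Q)).det.coeff m ≠ 0) : d ∣ m i0 := by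
  classical
  set S : Subring (MvPolynomial (Fin r) K) :=
    { carrier := {P : MvPolynomial (Fin r) K | ∀ m : Fin r →₀ ℕ, P.coeff m ≠ 0 → d ∣ m i0}
      zero_mem' := by intro m hm; simp at hm
      one_mem' := by
        intro m hm
        rw [coeff_one] at hm
        split at hm
        · rename_i h; subst h; simp
        · exact absurd rfl hm
      add_mem' := by
        intro a b ha hb m hm
        rw [coeff_add] at hm
        by_cases h1 : a.coeff m ≠ 0
        · exact ha m h1
        · push_neg at h1
          exact hb m (by rw [h1, zero_add] at hm; exact hm)
      neg_mem' := by
        intro a ha m hm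
        exact ha m (by simpa using hm)
      mul_mem' := by
        intro a b ha hb m hm
        have hmem : m ∈ (a * b).support := mem_support_iff.2 hm
        have hadd := MvPolynomial.support_mul a b hmem
        rw [Finset.mem_add] at hadd
        obtain ⟨u, hu, v, hv, rfl⟩ := hadd
        rw [Finsupp.add_apply]
        exact dvd_add (ha u (mem_support_iff.1 hu)) (hb v (mem_support_iff.1 hv)) } with hS
  have hW : ∀ j s : Fin d, (Matrix.of (Wmat i0 d Q)) j s ∈ S := by
    intro j s m hm
    exact Wmat_dvd_coeff i0 d Q j s m hm
  let M' : Matrix (Fin d) (Fin d) S := fun j s => ⟨Matrix.of (Wmat i0 d Q) j s, hW j s⟩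
  have hdet := RingHom.map_det (SubringClass.subtype S) M'
  have hMap : (SubringClass.subtype S).mapMatrix M' = Matrix.of (Wmat i0 d Q) := by
    ext j s; rfl
  rw [hMap] at hdet
  have hmem : (Matrix.of (Wmat i0 d Q)).det ∈ S := hdet ▸ SetLike.coe_mem _
  exact hmem m hm

lemma coeff_zero_W_lt (j s : Fin d) (hjs : (j : ℕ) < (s : ℕ)) :
    constantCoeff (Wmat i0 d Q j s) = 0 := by
  classical
  rw [Wmat, map_sum]
  refine Finset.sum_eq_zero fun e he => ?_
  rw [constantCoeff_monomial, if_neg]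
  intro hcontra
  have h0 := congrArg (fun f : Fin r →₀ ℕ => f i0) hcontra
  simp only [update_same, Finsupp.coe_zero, Pi.zero_apply] at h0
  omega

lemma coeff_zero_W_diag (s : Fin d) : constantCoeff (Wmat i0 d Q s s) = Q.coeff 0 := by
  classical
  rw [Wmat]
  have hexp : ∀ e : Fin r →₀ ℕ, e.update i0 (e i0 + (s : ℕ) - (s : ℕ)) = e := by
    intro e
    rw [Nat.add_sub_cancel, Finsupp.update_self]
  simp_rw [hexp]
  rw [map_sum]
  simp_rw [constantCoeff_monomial]
  rw [Finset.sum_ite_eq' _ (0 : Fin r →₀ ℕ) (fun e => Q.coeff e)]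
  split
  · rfl
  · rename_i h0
    by_contra hne
    apply h0
    rw [mem_filter]
    refine ⟨mem_support_iff.2 fun hc => hne (by rw [hc]), ?_⟩
    simp [Nat.mod_eq_of_lt s.isLt]

lemma coeff_zero_det : constantCoeff (Matrix.of (Wmat i0 d Q)).det = Q.coeff 0 ^ d := by
  classical
  rw [RingHom.map_det]
  rw [Matrix.det_of_lowerTriangular]
  · calc (∏ i : Fin d, (constantCoeff.mapMatrix (Matrix.of (Wmat i0 d Q))) i i)
        = ∏ _i : Fin d, Q.coeff 0 := by
          refine Finset.prod_congr rfl fun i _ => ?_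
          show constantCoeff (Wmat i0 d Q i i) = Q.coeff 0
          exact coeff_zero_W_diag i0 d Q i
      _ = Q.coeff 0 ^ d := by
          rw [Finset.prod_const, Finset.card_univ, Fintype.card_fin]
  · intro i j hij
    show constantCoeff (Wmat i0 d Q i j) = 0
    exact coeff_zero_W_lt i0 d Q i j hij

end DilationAux

/-- dilating the first coordinate of a rational `r`-sequence by a factor
`d ≥ 1` yields a rational `r`-sequence. -/
theorem dilation_rational {K : Type*} [Field K] {r : ℕ} (hr : 1 ≤ r)
    (a : (Fin r → ℕ) → K) (ha : IsRationalMSeq a) (d : ℕ) (hd : 1 ≤ d) :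
    IsRationalMSeq (fun n : Fin r → ℕ =>
      a (Function.update n ⟨0, hr⟩ (d * n ⟨0, hr⟩))) := by
  classical
  obtain ⟨P, Q, hQ0, hPQ⟩ := ha
  set i0 : Fin r := ⟨0, hr⟩ with hi0
  have hd0 : 0 < d := hd
  obtain ⟨R, hR⟩ := DilationAux.det_dvd i0 d Q hd0
  set Qt : MvPolynomial (Fin r) K := (Matrix.of (DilationAux.Wmat i0 d Q)).det with hQt
  have hQtDS : ∀ m : Fin r →₀ ℕ, Qt.coeff m ≠ 0 → d ∣ m i0 :=
    fun m hm => DilationAux.det_dvd_coeff i0 d Q hd0 m hm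
  have hcoe : ∀ m : Fin r →₀ ℕ,
      (⇑(DilationAux.upE i0 d m) : Fin r → ℕ) = Function.update (⇑m) i0 (d * m i0) := by
    intro m
    funext x
    rw [DilationAux.upE_apply, Function.update_apply]
  refine ⟨DilationAux.contract i0 d (P * R), DilationAux.contract i0 d Qt, ?_, ?_⟩
  · rw [DilationAux.contract_coeff i0 d hd0, DilationAux.upE_zero]
    have hdet : Qt.coeff 0 = Q.coeff 0 ^ d := DilationAux.coeff_zero_det i0 d Q
    rw [hdet]
    exact pow_ne_zero _ hQ0
  · ext m
    rw [MvPowerSeries.coeff_mul, MvPolynomial.coeff_coe,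
      DilationAux.contract_coeff i0 d hd0]
    have hPR : ((P * R : MvPolynomial (Fin r) K) : MvPowerSeries (Fin r) K)
        = hilbertSeries a * (Qt : MvPowerSeries (Fin r) K) := by
      rw [hR, MvPolynomial.coe_mul, MvPolynomial.coe_mul, ← hPQ]
      ring
    have hRHS : (P * R).coeff (DilationAux.upE i0 d m)
        = ∑ q ∈ Finset.HasAntidiagonal.antidiagonal (DilationAux.upE i0 d m),
            MvPowerSeries.coeff q.1 (hilbertSeries a) * Qt.coeff q.2 := by
      rw [← MvPolynomial.coeff_coe, hPR, MvPowerSeries.coeff_mul]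
      exact Finset.sum_congr rfl fun q _ => by rw [MvPolynomial.coeff_coe]
    have hfilter : (∑ q ∈ Finset.HasAntidiagonal.antidiagonal (DilationAux.upE i0 d m),
          MvPowerSeries.coeff q.1 (hilbertSeries a) * Qt.coeff q.2)
        = ∑ q ∈ (Finset.HasAntidiagonal.antidiagonal (DilationAux.upE i0 d m)).filter
            (fun q : (Fin r →₀ ℕ) × (Fin r →₀ ℕ) => d ∣ q.2 i0),
            MvPowerSeries.coeff q.1 (hilbertSeries a) * Qt.coeff q.2 := by
      refine (Finset.sum_filter_of_ne ?_).symm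
      intro q hq hne
      by_contra hndvd
      have h0 : Qt.coeff q.2 = 0 := not_not.mp (fun h => hndvd (hQtDS q.2 h))
      rw [h0, mul_zero] at hne
      exact hne rfl
    rw [hRHS, hfilter]
    refine Finset.sum_nbij' (i := fun p : (Fin r →₀ ℕ) × (Fin r →₀ ℕ) =>
        (DilationAux.upE i0 d p.1, DilationAux.upE i0 d p.2))
      (j := fun q : (Fin r →₀ ℕ) × (Fin r →₀ ℕ) =>
        (DilationAux.dnE i0 d q.1, DilationAux.dnE i0 d q.2)) ?_ ?_ ?_ ?_ ?_
    · intro p hp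
      rw [Finset.HasAntidiagonal.mem_antidiagonal] at hp
      rw [Finset.mem_filter, Finset.HasAntidiagonal.mem_antidiagonal]
      exact ⟨by rw [← DilationAux.upE_add, hp], ⟨p.2 i0, DilationAux.upE_i0 i0 d p.2⟩⟩
    · intro q hq
      rw [Finset.mem_filter, Finset.HasAntidiagonal.mem_antidiagonal] at hq
      obtain ⟨hsum, hdvd2⟩ := hq
      have hsum0 : q.1 i0 + q.2 i0 = d * m i0 := by
        have happ := congrArg (fun f : Fin r →₀ ℕ => f i0) hsum
        simpa [Finsupp.add_apply, DilationAux.upE_i0] using happ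
      have hdvd1 : d ∣ q.1 i0 := by
        have hall : d ∣ q.1 i0 + q.2 i0 := hsum0 ▸ Dvd.intro _ rfl
        rw [add_comm] at hall
        exact (Nat.dvd_add_right hdvd2).mp hall
      rw [Finset.HasAntidiagonal.mem_antidiagonal]
      ext x
      rcases eq_or_ne x i0 with hx | hx
      · subst hx
        obtain ⟨u, hu⟩ := hdvd1
        obtain ⟨v, hv⟩ := hdvd2
        rw [Finsupp.add_apply, DilationAux.dnE_apply, DilationAux.dnE_apply, if_pos rfl,
          if_pos rfl, hu, hv, Nat.mul_div_cancel_left _ hd0, Nat.mul_div_cancel_left _ hd0]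
        rw [hu, hv, ← Nat.mul_add] at hsum0
        exact Nat.eq_of_mul_eq_mul_left hd0 hsum0
      · have happ := congrArg (fun f : Fin r →₀ ℕ => f x) hsum
        simp only [Finsupp.add_apply] at happ ⊢
        rw [DilationAux.dnE_apply, DilationAux.dnE_apply, if_neg hx, if_neg hx]
        rw [DilationAux.upE_apply, if_neg hx] at happ
        exact happ
    · intro p _
      show (DilationAux.dnE i0 d (DilationAux.upE i0 d p.1),
        DilationAux.dnE i0 d (DilationAux.upE i0 d p.2)) = p
      rw [DilationAux.dnE_upE i0 d hd0, DilationAux.dnE_upE i0 d hd0]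
    · intro q hq
      rw [Finset.mem_filter, Finset.HasAntidiagonal.mem_antidiagonal] at hq
      obtain ⟨hsum, hdvd2⟩ := hq
      have hsum0 : q.1 i0 + q.2 i0 = d * m i0 := by
        have happ := congrArg (fun f : Fin r →₀ ℕ => f i0) hsum
        simpa [Finsupp.add_apply, DilationAux.upE_i0] using happ
      have hdvd1 : d ∣ q.1 i0 := by
        have hall : d ∣ q.1 i0 + q.2 i0 := hsum0 ▸ Dvd.intro _ rfl
        rw [add_comm] at hall
        exact (Nat.dvd_add_right hdvd2).mp hall
      show (DilationAux.upE i0 d (DilationAux.dnE i0 d q.1),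
        DilationAux.upE i0 d (DilationAux.dnE i0 d q.2)) = q
      rw [DilationAux.upE_dnE i0 d q.1 hdvd1, DilationAux.upE_dnE i0 d q.2 hdvd2]
    · intro p _
      have hfirst : MvPowerSeries.coeff p.1
          (hilbertSeries (fun n : Fin r → ℕ => a (Function.update n i0 (d * n i0))))
          = MvPowerSeries.coeff (DilationAux.upE i0 d p.1) (hilbertSeries a) := by
        show a (Function.update (⇑p.1) i0 (d * p.1 i0)) = a ⇑(DilationAux.upE i0 d p.1)
        rw [hcoe]
      have hsecond : MvPowerSeries.coeff p.2
          ((DilationAux.contract i0 d Qt : MvPolynomial (Fin r) K) : MvPowerSeries (Fin r) K)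
          = Qt.coeff (DilationAux.upE i0 d p.2) := by
        rw [MvPolynomial.coeff_coe, DilationAux.contract_coeff i0 d hd0]
      rw [hfirst, hsecond]
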